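/- Let π be a probability distribution with full support on {1,...,n}, and let B be drawn uniformly from the convex body B_π = {X ∈ ℝ^{n-1} : 0 ≤ X[i] ≤ min(1 - (π(i-1)/π(i))X[i-1], (π(i+1)/π(i))(1 - X[i+1])) for all i, with convention X[0] = X[n] = 0}. Then the sequence of coordinates B[1], B[2], ..., B[n-1] forms a Markov chain: for any 1 ≤ i ≤ n-2, constants a₁,...,aᵢ ∈ [0,1] and t ∈ [0,1], P[B[i+1] ≤ t | B[1] = a₁, ..., B[i] = aᵢ] = P[B[i+1] ≤ t | B[i] = aᵢ]. -/

import Mathlib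

open MeasureTheory

/-- Coordinate `i ∈ {1,…,n-1}` of a super-diagonal vector `X ∈ ℝ^{n-1}`, with the
conventions `X[0] = X[n] = 0`. -/
def extCoord (m : ℕ) (X : Fin m → ℝ) (i : ℕ) : ℝ :=
  if h : 1 ≤ i ∧ i ≤ m then X ⟨i - 1, by omega⟩ else 0

/-- The super-diagonal parameterization `B_π ⊆ ℝ^{n-1}` of birth and death kernels
with stationary distribution `π`. -/
def BDSet (n : ℕ) (π : ℕ → ℝ) : Set (Fin (n-1) → ℝ) :=
  {X | ∀ i : ℕ, 1 ≤ i → i ≤ n - 1 →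
    0 ≤ extCoord (n-1) X i ∧
    extCoord (n-1) X i ≤ min (1 - π (i-1) / π i * extCoord (n-1) X (i-1))
                            (π (i+1) / π i * (1 - extCoord (n-1) X (i+1)))}

/-- The uniform (normalized Lebesgue) probability measure on `B_π`. -/
noncomputable def unifBD (n : ℕ) (π : ℕ → ℝ) : Measure (Fin (n-1) → ℝ) :=
  (volume (BDSet n π))⁻¹ • volume.restrict (BDSet n π)

namespace BDAux

lemma extCoord_eq {m : ℕ} (X : Fin m → ℝ) {k : ℕ} (h1 : 1 ≤ k) (h2 : k ≤ m) :
    extCoord m X k = X ⟨k - 1, by omega⟩ := dif_pos ⟨h1, h2⟩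

lemma extCoord_zero {m : ℕ} (X : Fin m → ℝ) : extCoord m X 0 = 0 := by
  simp [extCoord]

lemma extCoord_of_gt {m : ℕ} (X : Fin m → ℝ) {k : ℕ} (h : m < k) : extCoord m X k = 0 := by
  rw [extCoord, dif_neg]; omega

lemma measurable_extCoord {m : ℕ} (k : ℕ) :
    Measurable (fun X : Fin m → ℝ => extCoord m X k) := by
  unfold extCoord
  split_ifs with h
  · exact measurable_pi_apply _
  · exact measurable_const

/-- The pairwise form of membership in `BDSet`. -/
lemma mem_BDSet_iff {n : ℕ} (hn : 3 ≤ n) {π : ℕ → ℝ}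
    (hπ : ∀ j, 1 ≤ j → j ≤ n → 0 < π j) (x : Fin (n-1) → ℝ) :
    x ∈ BDSet n π ↔
      ((∀ k, 1 ≤ k → k ≤ n-1 → 0 ≤ extCoord (n-1) x k ∧
          extCoord (n-1) x k ≤ 1 - π (k-1) / π k * extCoord (n-1) x (k-1)) ∧
        extCoord (n-1) x (n-1) ≤ π n / π (n-1)) := by
  constructor
  · intro hx
    refine ⟨fun k h1 h2 => ⟨(hx k h1 h2).1, le_trans (hx k h1 h2).2 (min_le_left _ _)⟩, ?_⟩
    have h := le_trans (hx (n-1) (by omega) le_rfl).2 (min_le_right _ _)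
    have hz : extCoord (n-1) x ((n-1)+1) = 0 := extCoord_of_gt x (by omega)
    have hn1 : (n-1)+1 = n := by omega
    rw [hz] at h
    rw [hn1] at h
    simpa using h
  · rintro ⟨h1, h2⟩ k hk1 hk2
    refine ⟨(h1 k hk1 hk2).1, le_min (h1 k hk1 hk2).2 ?_⟩
    by_cases hk : k = n - 1
    · subst hk
      have hz : extCoord (n-1) x ((n-1)+1) = 0 := extCoord_of_gt x (by omega)
      rw [hz]
      have hn1 : (n-1)+1 = n := by omega
      rw [hn1]
      simpa using h2
    · -- k < n-1; use constraint at k+1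
      have hk2' : k + 1 ≤ n - 1 := by omega
      have h := (h1 (k+1) (by omega) hk2').2
      have hπk : 0 < π k := hπ k hk1 (by omega)
      have hπk1 : 0 < π (k+1) := hπ (k+1) (by omega) (by omega)
      have hs : (k+1) - 1 = k := by omega
      rw [hs] at h
      have hcan : π k / π (k+1) * π (k+1) = π k := div_mul_cancel₀ _ (ne_of_gt hπk1)
      have hmul := mul_le_mul_of_nonneg_left h hπk1.le
      have hnn : 0 ≤ extCoord (n-1) x k := (h1 k hk1 hk2).1
      rw [div_mul_eq_mul_div, le_div_iff₀ hπk]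
      nlinarith [hmul, hcan, hnn, hπk, hπk1]

lemma extCoord_nonneg_of_mem {n : ℕ} (hn : 3 ≤ n) {π : ℕ → ℝ}
    (hπ : ∀ j, 1 ≤ j → j ≤ n → 0 < π j) {x : Fin (n-1) → ℝ} (hx : x ∈ BDSet n π)
    (k : ℕ) : 0 ≤ extCoord (n-1) x k := by
  by_cases h1 : 1 ≤ k ∧ k ≤ n - 1
  · exact (((mem_BDSet_iff hn hπ x).mp hx).1 k h1.1 h1.2).1
  · rcases Nat.lt_or_ge k 1 with h | h
    · have hk0 : k = 0 := by omega
      subst hk0; simp [extCoord_zero]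
    · have hgt : n - 1 < k := by omega
      rw [extCoord_of_gt x hgt]

lemma extCoord_le_one_of_mem {n : ℕ} (hn : 3 ≤ n) {π : ℕ → ℝ}
    (hπ : ∀ j, 1 ≤ j → j ≤ n → 0 < π j) {x : Fin (n-1) → ℝ} (hx : x ∈ BDSet n π)
    {k : ℕ} (h1 : 1 ≤ k) (h2 : k ≤ n - 1) : extCoord (n-1) x k ≤ 1 := by
  have h := (((mem_BDSet_iff hn hπ x).mp hx).1 k h1 h2).2
  have hprev : 0 ≤ π (k-1) / π k * extCoord (n-1) x (k-1) := by
    by_cases hk1 : k = 1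
    · subst hk1; simp [extCoord_zero]
    · have hπa : 0 < π (k-1) := hπ (k-1) (by omega) (by omega)
      have hπb : 0 < π k := hπ k h1 (by omega)
      exact mul_nonneg (le_of_lt (div_pos hπa hπb))
        (extCoord_nonneg_of_mem hn hπ hx (k-1))
  linarith

lemma BDSet_subset_cube {n : ℕ} (hn : 3 ≤ n) {π : ℕ → ℝ}
    (hπ : ∀ j, 1 ≤ j → j ≤ n → 0 < π j) :
    BDSet n π ⊆ Set.pi Set.univ (fun _ : Fin (n-1) => Set.Icc (0:ℝ) 1) := by
  intro x hx j _
  have h1 : (1:ℕ) ≤ j.1 + 1 := by omega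
  have h2 : j.1 + 1 ≤ n - 1 := by omega
  have he : extCoord (n-1) x (j.1+1) = x j := by
    rw [extCoord_eq x h1 h2]
    apply congrArg
    apply Fin.ext
    simp
  constructor
  · rw [← he]; exact extCoord_nonneg_of_mem hn hπ hx _
  · rw [← he]; exact extCoord_le_one_of_mem hn hπ hx h1 h2

lemma measurableSet_BDSet (n : ℕ) (π : ℕ → ℝ) : MeasurableSet (BDSet n π) := by
  have : BDSet n π = ⋂ k : ℕ, {x : Fin (n-1) → ℝ | 1 ≤ k → k ≤ n-1 →
      0 ≤ extCoord (n-1) x k ∧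
      extCoord (n-1) x k ≤ min (1 - π (k-1) / π k * extCoord (n-1) x (k-1))
        (π (k+1) / π k * (1 - extCoord (n-1) x (k+1)))} := by
    ext x; simp [BDSet, Set.mem_iInter]
  rw [this]
  refine MeasurableSet.iInter fun k => ?_
  by_cases h : 1 ≤ k ∧ k ≤ n - 1
  · have : {x : Fin (n-1) → ℝ | 1 ≤ k → k ≤ n-1 →
        0 ≤ extCoord (n-1) x k ∧
        extCoord (n-1) x k ≤ min (1 - π (k-1) / π k * extCoord (n-1) x (k-1))
          (π (k+1) / π k * (1 - extCoord (n-1) x (k+1)))} =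
        {x : Fin (n-1) → ℝ | 0 ≤ extCoord (n-1) x k} ∩
        {x | extCoord (n-1) x k ≤ min (1 - π (k-1) / π k * extCoord (n-1) x (k-1))
          (π (k+1) / π k * (1 - extCoord (n-1) x (k+1)))} := by
      ext x; simp [h.1, h.2]
    rw [this]
    refine (measurableSet_le measurable_const (measurable_extCoord k)).inter
      (measurableSet_le (measurable_extCoord k) ?_)
    exact Measurable.min
      (measurable_const.sub ((measurable_extCoord (k-1)).const_mul _))
      (((measurable_extCoord (k+1)).const_sub _).const_mul _)
  · have : {x : Fin (n-1) → ℝ | 1 ≤ k → k ≤ n-1 →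
        0 ≤ extCoord (n-1) x k ∧
        extCoord (n-1) x k ≤ min (1 - π (k-1) / π k * extCoord (n-1) x (k-1))
          (π (k+1) / π k * (1 - extCoord (n-1) x (k+1)))} = Set.univ := by
      ext x; simp only [Set.mem_setOf_eq, Set.mem_univ, iff_true]
      intro hh1 hh2; exact absurd ⟨hh1, hh2⟩ h
    rw [this]; exact MeasurableSet.univ

/-! ### Split coordinates -/

variable {n i : ℕ}

/-- left coordinates: original indices `1 ≤ k ≤ i`. -/
def lc (n i : ℕ) (pv : {j : Fin (n-1) // (j:ℕ) < i} → ℝ) (k : ℕ) : ℝ :=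
  if h : 1 ≤ k ∧ k ≤ i ∧ i < n - 1 then pv ⟨⟨k-1, by omega⟩, by show k - 1 < i; omega⟩ else 0

/-- right coordinates: original indices `i+1 ≤ k ≤ n-1`. -/
def rc (n i : ℕ) (qv : {j : Fin (n-1) // ¬ (j:ℕ) < i} → ℝ) (k : ℕ) : ℝ :=
  if h : i + 1 ≤ k ∧ k ≤ n - 1 then qv ⟨⟨k-1, by omega⟩, by show ¬ k - 1 < i; omega⟩ else 0

lemma measurable_lc (k : ℕ) : Measurable (fun pv => lc n i pv k) := by
  unfold lc; split_ifs with h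
  · exact measurable_pi_apply _
  · exact measurable_const

lemma measurable_rc (k : ℕ) : Measurable (fun qv => rc n i qv k) := by
  unfold rc; split_ifs with h
  · exact measurable_pi_apply _
  · exact measurable_const

lemma lc_eq (x : Fin (n-1) → ℝ) {k : ℕ} (h1 : 1 ≤ k) (h2 : k ≤ i) (h3 : i < n-1) :
    lc n i (fun j => x j.1) k = extCoord (n-1) x k := by
  have h2' : k ≤ n - 1 := by omega
  unfold lc
  rw [dif_pos ⟨h1, h2, h3⟩, extCoord_eq x h1 h2']

lemma rc_eq (x : Fin (n-1) → ℝ) {k : ℕ} (h1 : i + 1 ≤ k) (h2 : k ≤ n-1) :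
    rc n i (fun j => x j.1) k = extCoord (n-1) x k := by
  have h1' : 1 ≤ k := by omega
  unfold rc
  rw [dif_pos ⟨h1, h2⟩, extCoord_eq x h1' h2]

lemma lc_zero (pv : {j : Fin (n-1) // (j:ℕ) < i} → ℝ) : lc n i pv 0 = 0 := by
  rw [lc, dif_neg]; omega

/-- Constraints involving only the first `i` coordinates. -/
def PSet (n : ℕ) (π : ℕ → ℝ) (i : ℕ) : Set ({j : Fin (n-1) // (j:ℕ) < i} → ℝ) :=
  {pv | ∀ k, 1 ≤ k → k ≤ i →
    0 ≤ lc n i pv k ∧ lc n i pv k ≤ 1 - π (k-1) / π k * lc n i pv (k-1)}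

/-- Constraints involving coordinates `i+1,…,n-1`, given the value `a` of coordinate `i`. -/
def QSet (n : ℕ) (π : ℕ → ℝ) (i : ℕ) (a : ℝ) : Set ({j : Fin (n-1) // ¬ (j:ℕ) < i} → ℝ) :=
  {qv | (∀ k, i+1 ≤ k → k ≤ n-1 →
      0 ≤ rc n i qv k ∧
      rc n i qv k ≤ 1 - π (k-1) / π k * (if k = i+1 then a else rc n i qv (k-1))) ∧
    rc n i qv (n-1) ≤ π n / π (n-1)}

lemma measurableSet_PSet (n : ℕ) (π : ℕ → ℝ) (i : ℕ) : MeasurableSet (PSet n π i) := by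
  have : PSet n π i = ⋂ k : ℕ, {pv | 1 ≤ k → k ≤ i →
      0 ≤ lc n i pv k ∧ lc n i pv k ≤ 1 - π (k-1) / π k * lc n i pv (k-1)} := by
    ext pv; simp [PSet, Set.mem_iInter]
  rw [this]
  refine MeasurableSet.iInter fun k => ?_
  by_cases h : 1 ≤ k ∧ k ≤ i
  · have hset : {pv : {j : Fin (n-1) // (j:ℕ) < i} → ℝ | 1 ≤ k → k ≤ i →
        0 ≤ lc n i pv k ∧ lc n i pv k ≤ 1 - π (k-1) / π k * lc n i pv (k-1)} =
        {pv | 0 ≤ lc n i pv k} ∩ {pv | lc n i pv k ≤ 1 - π (k-1) / π k * lc n i pv (k-1)} := by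
      ext pv; simp [h.1, h.2]
    rw [hset]
    exact (measurableSet_le measurable_const (measurable_lc k)).inter
      (measurableSet_le (measurable_lc k)
        (measurable_const.sub ((measurable_lc (k-1)).const_mul _)))
  · have hset : {pv : {j : Fin (n-1) // (j:ℕ) < i} → ℝ | 1 ≤ k → k ≤ i →
        0 ≤ lc n i pv k ∧ lc n i pv k ≤ 1 - π (k-1) / π k * lc n i pv (k-1)} = Set.univ := by
      ext pv; simp only [Set.mem_setOf_eq, Set.mem_univ, iff_true]
      intro hh1 hh2; exact absurd ⟨hh1, hh2⟩ h
    rw [hset]; exact MeasurableSet.univ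

/-- The graph set of the `QSet` family, jointly in `(a, qv)`. -/
def QRel (n : ℕ) (π : ℕ → ℝ) (i : ℕ) : Set (ℝ × ({j : Fin (n-1) // ¬ (j:ℕ) < i} → ℝ)) :=
  {z | z.2 ∈ QSet n π i z.1}

lemma measurableSet_QRel (n : ℕ) (π : ℕ → ℝ) (i : ℕ) : MeasurableSet (QRel n π i) := by
  have : QRel n π i = (⋂ k : ℕ, {z : ℝ × ({j : Fin (n-1) // ¬ (j:ℕ) < i} → ℝ) |
        i+1 ≤ k → k ≤ n-1 → 0 ≤ rc n i z.2 k ∧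
        rc n i z.2 k ≤ 1 - π (k-1) / π k * (if k = i+1 then z.1 else rc n i z.2 (k-1))}) ∩
      {z | rc n i z.2 (n-1) ≤ π n / π (n-1)} := by
    ext z; simp only [QRel, QSet, Set.mem_setOf_eq, Set.mem_inter_iff, Set.mem_iInter]
  rw [this]
  refine MeasurableSet.inter (MeasurableSet.iInter fun k => ?_)
    (measurableSet_le ((measurable_rc (n-1)).comp measurable_snd) measurable_const)
  by_cases h : i+1 ≤ k ∧ k ≤ n-1
  · have hprev : Measurable fun z : ℝ × ({j : Fin (n-1) // ¬ (j:ℕ) < i} → ℝ) =>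
        (if k = i+1 then z.1 else rc n i z.2 (k-1)) := by
      by_cases hk : k = i+1
      · simp only [hk, if_pos rfl]; exact measurable_fst
      · simp only [if_neg hk]; exact (measurable_rc (k-1)).comp measurable_snd
    have hset : {z : ℝ × ({j : Fin (n-1) // ¬ (j:ℕ) < i} → ℝ) |
        i+1 ≤ k → k ≤ n-1 → 0 ≤ rc n i z.2 k ∧
        rc n i z.2 k ≤ 1 - π (k-1) / π k * (if k = i+1 then z.1 else rc n i z.2 (k-1))} =
        {z | 0 ≤ rc n i z.2 k} ∩ {z | rc n i z.2 k ≤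
          1 - π (k-1) / π k * (if k = i+1 then z.1 else rc n i z.2 (k-1))} := by
      ext z; simp [h.1, h.2]
    rw [hset]
    exact (measurableSet_le measurable_const ((measurable_rc k).comp measurable_snd)).inter
      (measurableSet_le ((measurable_rc k).comp measurable_snd)
        (measurable_const.sub (hprev.const_mul _)))
  · have hset : {z : ℝ × ({j : Fin (n-1) // ¬ (j:ℕ) < i} → ℝ) |
        i+1 ≤ k → k ≤ n-1 → 0 ≤ rc n i z.2 k ∧
        rc n i z.2 k ≤ 1 - π (k-1) / π k * (if k = i+1 then z.1 else rc n i z.2 (k-1))} =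
        Set.univ := by
      ext z; simp only [Set.mem_setOf_eq, Set.mem_univ, iff_true]
      intro hh1 hh2; exact absurd ⟨hh1, hh2⟩ h
    rw [hset]; exact MeasurableSet.univ

lemma measurableSet_QSet (n : ℕ) (π : ℕ → ℝ) (i : ℕ) (a : ℝ) :
    MeasurableSet (QSet n π i a) :=
  measurable_prodMk_left (measurableSet_QRel n π i)

/-- The factorization of `BDSet` along the split at coordinate `i`. -/
lemma splitBD (hn : 3 ≤ n) {π : ℕ → ℝ} (hπ : ∀ j, 1 ≤ j → j ≤ n → 0 < π j)
    (hi1 : 1 ≤ i) (hi2 : i ≤ n - 2) (x : Fin (n-1) → ℝ) :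
    x ∈ BDSet n π ↔
      ((fun j : {j : Fin (n-1) // (j:ℕ) < i} => x j.1) ∈ PSet n π i ∧
       (fun j : {j : Fin (n-1) // ¬ (j:ℕ) < i} => x j.1) ∈
          QSet n π i (extCoord (n-1) x i)) := by
  have hin : i < n - 1 := by omega
  rw [mem_BDSet_iff hn hπ x]
  constructor
  · rintro ⟨h1, h2⟩
    refine ⟨fun k hk1 hk2 => ?_, fun k hk1 hk2 => ?_, ?_⟩
    · have hprev : lc n i (fun j => x j.1) (k-1) = extCoord (n-1) x (k-1) := by
        by_cases hk : k = 1
        · subst hk; simp [lc_zero, extCoord_zero]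
        · exact lc_eq x (by omega) (by omega) hin
      rw [lc_eq x hk1 hk2 hin, hprev]
      exact h1 k hk1 (by omega)
    · have hcur : rc n i (fun j => x j.1) k = extCoord (n-1) x k := rc_eq x hk1 hk2
      have hprev : (if k = i+1 then extCoord (n-1) x i
          else rc n i (fun j => x j.1) (k-1)) = extCoord (n-1) x (k-1) := by
        by_cases hk : k = i+1
        · subst hk; simp
        · rw [if_neg hk, rc_eq x (by omega) (by omega)]
      rw [hcur, hprev]
      exact h1 k (by omega) hk2
    · rw [rc_eq x (by omega) le_rfl]; exact h2
  · rintro ⟨hP, hQ1, hQ2⟩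
    constructor
    · intro k hk1 hk2
      by_cases hk : k ≤ i
      · have := hP k hk1 hk
        have hprev : lc n i (fun j => x j.1) (k-1) = extCoord (n-1) x (k-1) := by
          by_cases hk' : k = 1
          · subst hk'; simp [lc_zero, extCoord_zero]
          · exact lc_eq x (by omega) (by omega) hin
        rw [lc_eq x hk1 hk hin, hprev] at this
        exact this
      · have hk' : i + 1 ≤ k := by omega
        have := hQ1 k hk' hk2
        have hcur : rc n i (fun j => x j.1) k = extCoord (n-1) x k := rc_eq x hk' hk2
        have hprev : (if k = i+1 then extCoord (n-1) x i
            else rc n i (fun j => x j.1) (k-1)) = extCoord (n-1) x (k-1) := by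
          by_cases hkk : k = i+1
          · subst hkk; simp
          · rw [if_neg hkk, rc_eq x (by omega) (by omega)]
        rw [hcur, hprev] at this
        exact this
    · rw [rc_eq x (by omega) le_rfl] at hQ2; exact hQ2


/-! ### Slice measures -/

noncomputable def Zfun (n : ℕ) (π : ℕ → ℝ) (i : ℕ) (a : ℝ) : ENNReal :=
  volume (QSet n π i a)

noncomputable def Nfun (n : ℕ) (π : ℕ → ℝ) (i : ℕ) (t : ℝ) (a : ℝ) : ENNReal :=
  volume (QSet n π i a ∩ {qv | rc n i qv (i+1) ≤ t})

noncomputable def phiBD (n : ℕ) (π : ℕ → ℝ) (i : ℕ) (t : ℝ) (a : ℝ) : ℝ :=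
  (Nfun n π i t a / Zfun n π i a).toReal

lemma measurable_Zfun (n : ℕ) (π : ℕ → ℝ) (i : ℕ) : Measurable (Zfun n π i) := by
  have h := measurable_measure_prodMk_left
    (ν := (volume : Measure ({j : Fin (n-1) // ¬ (j:ℕ) < i} → ℝ))) (measurableSet_QRel n π i)
  exact h

lemma measurableSet_rcle (n i : ℕ) (t : ℝ) :
    MeasurableSet {qv : {j : Fin (n-1) // ¬ (j:ℕ) < i} → ℝ | rc n i qv (i+1) ≤ t} :=
  measurableSet_le (measurable_rc (i+1)) measurable_const

lemma measurable_Nfun (n : ℕ) (π : ℕ → ℝ) (i : ℕ) (t : ℝ) :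
    Measurable (Nfun n π i t) := by
  have hset : MeasurableSet (QRel n π i ∩
      {z : ℝ × ({j : Fin (n-1) // ¬ (j:ℕ) < i} → ℝ) | rc n i z.2 (i+1) ≤ t}) :=
    (measurableSet_QRel n π i).inter
      (measurableSet_le ((measurable_rc (i+1)).comp measurable_snd) measurable_const)
  have h := measurable_measure_prodMk_left
    (ν := (volume : Measure ({j : Fin (n-1) // ¬ (j:ℕ) < i} → ℝ))) hset
  exact h

lemma rc_apply {n i : ℕ} (qv : {j : Fin (n-1) // ¬ (j:ℕ) < i} → ℝ)
    (j : {j : Fin (n-1) // ¬ (j:ℕ) < i}) : rc n i qv (j.1.1+1) = qv j := by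
  have h1 : i + 1 ≤ j.1.1 + 1 := by have := j.2; omega
  have h2 : j.1.1 + 1 ≤ n - 1 := by have := j.1.isLt; omega
  unfold rc
  rw [dif_pos ⟨h1, h2⟩]
  exact congrArg qv (Subtype.ext (Fin.ext (by simp)))

lemma QSet_subset_cube {n i : ℕ} (hn : 3 ≤ n) {π : ℕ → ℝ}
    (hπ : ∀ j, 1 ≤ j → j ≤ n → 0 < π j) (hi1 : 1 ≤ i) (hi2 : i ≤ n - 2) (a : ℝ) :
    QSet n π i a ⊆ Set.pi Set.univ
      (fun _ : {j : Fin (n-1) // ¬ (j:ℕ) < i} =>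
        Set.Icc (0:ℝ) (max 1 (1 - π i / π (i+1) * a))) := by
  intro qv hq j _
  set k := j.1.1 + 1 with hk
  have hk1 : i + 1 ≤ k := by have := j.2; omega
  have hk2 : k ≤ n - 1 := by have := j.1.isLt; omega
  have hqk := hq.1 k hk1 hk2
  rw [← rc_apply qv j]
  refine ⟨hqk.1, ?_⟩
  by_cases hki : k = i + 1
  · have : (1 : ℝ) - π (k-1) / π k * (if k = i+1 then a else rc n i qv (k-1)) =
        1 - π i / π (i+1) * a := by
      rw [if_pos hki, hki]; norm_num
    refine le_trans hqk.2 ?_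
    rw [this]
    exact le_max_right _ _
  · have hprev_nonneg : 0 ≤ rc n i qv (k-1) := (hq.1 (k-1) (by omega) (by omega)).1
    have hπa : 0 < π (k-1) := hπ (k-1) (by omega) (by omega)
    have hπb : 0 < π k := hπ k (by omega) (by omega)
    refine le_trans hqk.2 (le_trans ?_ (le_max_left _ _))
    rw [if_neg hki]
    nlinarith [mul_nonneg (le_of_lt (div_pos hπa hπb)) hprev_nonneg]

lemma Zfun_lt_top {n i : ℕ} (hn : 3 ≤ n) {π : ℕ → ℝ}
    (hπ : ∀ j, 1 ≤ j → j ≤ n → 0 < π j) (hi1 : 1 ≤ i) (hi2 : i ≤ n - 2) (a : ℝ) :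
    Zfun n π i a < ⊤ := by
  refine lt_of_le_of_lt (measure_mono (QSet_subset_cube hn hπ hi1 hi2 a)) ?_
  rw [volume_pi_pi]
  exact ENNReal.prod_lt_top fun _ _ => by
    rw [Real.volume_Icc]; exact ENNReal.ofReal_lt_top

lemma Nfun_le_Zfun (n : ℕ) (π : ℕ → ℝ) (i : ℕ) (t : ℝ) (a : ℝ) :
    Nfun n π i t a ≤ Zfun n π i a :=
  measure_mono Set.inter_subset_left

lemma NdivZ_ne_top (n : ℕ) (π : ℕ → ℝ) (i : ℕ) (t : ℝ) {a : ℝ}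
    (hZ : Zfun n π i a < ⊤) : Nfun n π i t a / Zfun n π i a ≠ ⊤ := by
  by_cases hz : Zfun n π i a = 0
  · have hN : Nfun n π i t a = 0 := le_antisymm (hz ▸ Nfun_le_Zfun n π i t a) zero_le
    simp [hz, hN]
  · exact (ENNReal.div_lt_top (ne_top_of_le_ne_top hZ.ne (Nfun_le_Zfun n π i t a)) hz).ne

lemma ofReal_phiBD (n : ℕ) (π : ℕ → ℝ) (i : ℕ) (t : ℝ) {a : ℝ}
    (hZ : Zfun n π i a < ⊤) :
    ENNReal.ofReal (phiBD n π i t a) = Nfun n π i t a / Zfun n π i a :=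
  ENNReal.ofReal_toReal (NdivZ_ne_top n π i t hZ)

lemma NdivZ_mul_Z (n : ℕ) (π : ℕ → ℝ) (i : ℕ) (t : ℝ) {a : ℝ}
    (hZ : Zfun n π i a < ⊤) :
    Nfun n π i t a / Zfun n π i a * Zfun n π i a = Nfun n π i t a := by
  by_cases hz : Zfun n π i a = 0
  · have hN : Nfun n π i t a = 0 := le_antisymm (hz ▸ Nfun_le_Zfun n π i t a) zero_le
    simp [hz, hN]
  · exact ENNReal.div_mul_cancel hz hZ.ne

lemma phiBD_nonneg (n : ℕ) (π : ℕ → ℝ) (i : ℕ) (t : ℝ) (a : ℝ) :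
    0 ≤ phiBD n π i t a := ENNReal.toReal_nonneg

lemma phiBD_le_one (n : ℕ) (π : ℕ → ℝ) (i : ℕ) (t : ℝ) (a : ℝ) :
    phiBD n π i t a ≤ 1 := by
  have h : Nfun n π i t a / Zfun n π i a ≤ 1 :=
    ENNReal.div_le_of_le_mul (by rw [one_mul]; exact Nfun_le_Zfun n π i t a)
  calc (Nfun n π i t a / Zfun n π i a).toReal ≤ (1 : ENNReal).toReal :=
        ENNReal.toReal_mono ENNReal.one_ne_top h
    _ = 1 := by simp

lemma measurable_phiBD (n : ℕ) (π : ℕ → ℝ) (i : ℕ) (t : ℝ) :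
    Measurable (phiBD n π i t) :=
  (Measurable.div (measurable_Nfun n π i t) (measurable_Zfun n π i)).ennreal_toReal


/-! ### The key integral identity -/

lemma key_lintegral {n i : ℕ} (hn : 3 ≤ n) {π : ℕ → ℝ}
    (hπ : ∀ j, 1 ≤ j → j ≤ n → 0 < π j) (hi1 : 1 ≤ i) (hi2 : i ≤ n - 2) (t : ℝ)
    (A : Set (Fin i → ℝ)) (hA : MeasurableSet A) :
    volume ((fun X (j : Fin i) => extCoord (n-1) X (j.1 + 1)) ⁻¹' A ∩ BDSet n π
        ∩ {X | extCoord (n-1) X (i+1) ≤ t}) =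
    ∫⁻ x in (fun X (j : Fin i) => extCoord (n-1) X (j.1 + 1)) ⁻¹' A ∩ BDSet n π,
      ENNReal.ofReal (phiBD n π i t (extCoord (n-1) x i)) ∂volume := by
  classical
  have hin : i < n - 1 := by omega
  set L := ({j : Fin (n-1) // (j:ℕ) < i} → ℝ)
  set R := ({j : Fin (n-1) // ¬ (j:ℕ) < i} → ℝ)
  set e := MeasurableEquiv.piEquivPiSubtypeProd (fun _ : Fin (n-1) => ℝ)
    (fun j : Fin (n-1) => (j:ℕ) < i) with he_def
  have mp : MeasurePreserving e volume volume :=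
    volume_preserving_piEquivPiSubtypeProd (fun _ : Fin (n-1) => ℝ)
      (fun j : Fin (n-1) => (j:ℕ) < i)
  have he_apply : ∀ x : Fin (n-1) → ℝ,
      e x = (fun j : {j : Fin (n-1) // (j:ℕ) < i} => x j.1,
             fun j : {j : Fin (n-1) // ¬ (j:ℕ) < i} => x j.1) := fun x => rfl
  set Pmap := fun (X : Fin (n-1) → ℝ) (j : Fin i) => extCoord (n-1) X (j.1 + 1) with hPmap
  set ρ := fun (pv : L) (j : Fin i) => lc n i pv (j.1 + 1) with hρ
  set alc := fun pv : L => lc n i pv i with halc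
  have hρ_meas : Measurable ρ :=
    measurable_pi_lambda _ fun j => measurable_lc (j.1 + 1)
  have halc_meas : Measurable alc := measurable_lc i
  have hρ_comp : ∀ x : Fin (n-1) → ℝ,
      ρ (fun j => x j.1) = Pmap x := by
    intro x; funext j
    exact lc_eq x (by omega) (by omega : j.1 + 1 ≤ i) hin
  have halc_comp : ∀ x : Fin (n-1) → ℝ,
      alc (fun j => x j.1) = extCoord (n-1) x i :=
    fun x => lc_eq x hi1 le_rfl hin
  set W : Set L := (ρ ⁻¹' A) ∩ PSet n π i with hW_def
  have hW : MeasurableSet W := (hρ_meas hA).inter (measurableSet_PSet n π i)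
  set SA : Set (L × R) := {z | z.1 ∈ W ∧ z.2 ∈ QSet n π i (alc z.1)} with hSA_def
  have hSA : MeasurableSet SA := by
    have : SA = (W ×ˢ (Set.univ : Set R)) ∩
        ((fun z : L × R => (alc z.1, z.2)) ⁻¹' QRel n π i) := by
      ext z
      simp only [hSA_def, Set.mem_setOf_eq, Set.mem_inter_iff, Set.mem_prod, Set.mem_univ,
        and_true, Set.mem_preimage, QRel]
      exact Iff.rfl
    rw [this]
    exact (hW.prod MeasurableSet.univ).inter
      ((halc_meas.comp measurable_fst |>.prodMk measurable_snd) (measurableSet_QRel n π i))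
  set Tr : Set R := {qv | rc n i qv (i+1) ≤ t} with hTr_def
  have hTr : MeasurableSet Tr := measurableSet_rcle n i t
  set SAT : Set (L × R) := SA ∩ ((Set.univ : Set L) ×ˢ Tr) with hSAT_def
  have hSAT : MeasurableSet SAT := hSA.inter (MeasurableSet.univ.prod hTr)
  -- transfer sets
  have hpre1 : e ⁻¹' SA = Pmap ⁻¹' A ∩ BDSet n π := by
    ext x
    rw [Set.mem_preimage, he_apply x]
    simp only [hSA_def, Set.mem_setOf_eq, hW_def, Set.mem_inter_iff, Set.mem_preimage]
    change ((ρ (fun j => x j.1) ∈ A ∧ (fun j => x j.1) ∈ PSet n π i) ∧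
      (fun j : {j : Fin (n-1) // ¬ (j:ℕ) < i} => x j.1) ∈ QSet n π i (alc (fun j => x j.1))) ↔ _
    rw [hρ_comp x, halc_comp x]
    rw [splitBD hn hπ hi1 hi2 x]
    tauto
  have hpre2 : e ⁻¹' SAT = Pmap ⁻¹' A ∩ BDSet n π ∩ {X | extCoord (n-1) X (i+1) ≤ t} := by
    rw [hSAT_def, Set.preimage_inter, hpre1]
    congr 1
    ext x
    rw [Set.mem_preimage, he_apply x]
    simp only [Set.mem_prod, Set.mem_univ, true_and, hTr_def, Set.mem_setOf_eq]
    rw [rc_eq x le_rfl (by omega : i + 1 ≤ n - 1)]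
  -- LHS computation
  have hLHS : volume (Pmap ⁻¹' A ∩ BDSet n π ∩ {X | extCoord (n-1) X (i+1) ≤ t}) =
      ∫⁻ pv, W.indicator (fun pv => Nfun n π i t (alc pv)) pv ∂volume := by
    rw [← hpre2, mp.measure_preimage hSAT.nullMeasurableSet]
    rw [Measure.volume_eq_prod, Measure.prod_apply hSAT]
    refine lintegral_congr fun pv => ?_
    by_cases hpv : pv ∈ W
    · have hslice : Prod.mk pv ⁻¹' SAT = QSet n π i (alc pv) ∩ Tr := by
        ext qv
        simp only [hSAT_def, hSA_def, Set.mem_preimage, Set.mem_inter_iff, Set.mem_setOf_eq,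
          Set.mem_prod, Set.mem_univ, true_and]
        tauto
      rw [hslice, Set.indicator_of_mem hpv]
      rfl
    · have hslice : Prod.mk pv ⁻¹' SAT = ∅ := by
        ext qv
        simp only [hSAT_def, hSA_def, Set.mem_preimage, Set.mem_inter_iff, Set.mem_setOf_eq,
          Set.mem_prod, Set.mem_univ, true_and, Set.mem_empty_iff_false, iff_false]
        tauto
      rw [hslice, Set.indicator_of_notMem hpv]
      simp
  -- RHS computation
  have hG_meas : Measurable (fun z : L × R => Nfun n π i t (alc z.1) / Zfun n π i (alc z.1)) :=
    ((measurable_Nfun n π i t).comp (halc_meas.comp measurable_fst)).div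
      ((measurable_Zfun n π i).comp (halc_meas.comp measurable_fst))
  have hRHS : (∫⁻ x in Pmap ⁻¹' A ∩ BDSet n π,
      ENNReal.ofReal (phiBD n π i t (extCoord (n-1) x i)) ∂volume) =
      ∫⁻ pv, W.indicator (fun pv => Nfun n π i t (alc pv)) pv ∂volume := by
    have hmeas_pre : MeasurableSet (e ⁻¹' SA) := e.measurable hSA
    rw [← hpre1, ← lintegral_indicator hmeas_pre]
    have hpt : ∀ x, (e ⁻¹' SA).indicator
        (fun x => ENNReal.ofReal (phiBD n π i t (extCoord (n-1) x i))) x =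
        SA.indicator (fun z => Nfun n π i t (alc z.1) / Zfun n π i (alc z.1)) (e x) := by
      intro x
      by_cases hx : x ∈ e ⁻¹' SA
      · rw [Set.indicator_of_mem hx, Set.indicator_of_mem (show e x ∈ SA from hx)]
        rw [he_apply x]
        simp only
        rw [halc_comp x]
        exact ofReal_phiBD n π i t (Zfun_lt_top hn hπ hi1 hi2 _)
      · rw [Set.indicator_of_notMem hx, Set.indicator_of_notMem (show e x ∉ SA from hx)]
    rw [lintegral_congr hpt]
    rw [mp.lintegral_comp (hG_meas.indicator hSA)]
    rw [Measure.volume_eq_prod]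
    rw [lintegral_prod _ (hG_meas.indicator hSA).aemeasurable]
    refine lintegral_congr fun pv => ?_
    by_cases hpv : pv ∈ W
    · have hpt2 : ∀ qv : R, SA.indicator
          (fun z => Nfun n π i t (alc z.1) / Zfun n π i (alc z.1)) (pv, qv) =
          (QSet n π i (alc pv)).indicator
            (fun _ => Nfun n π i t (alc pv) / Zfun n π i (alc pv)) qv := by
        intro qv
        by_cases hq : qv ∈ QSet n π i (alc pv)
        · rw [Set.indicator_of_mem (show (pv, qv) ∈ SA from ⟨hpv, hq⟩),
            Set.indicator_of_mem hq]
        · rw [Set.indicator_of_notMem (show (pv, qv) ∉ SA from fun h => hq h.2),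
            Set.indicator_of_notMem hq]
      rw [lintegral_congr hpt2, lintegral_indicator_const (measurableSet_QSet n π i _),
        Set.indicator_of_mem hpv]
      exact NdivZ_mul_Z n π i t (Zfun_lt_top hn hπ hi1 hi2 _)
    · have hpt2 : ∀ qv : R, SA.indicator
          (fun z => Nfun n π i t (alc z.1) / Zfun n π i (alc z.1)) (pv, qv) = 0 := by
        intro qv
        exact Set.indicator_of_notMem (fun h => hpv h.1) _
      rw [lintegral_congr hpt2, Set.indicator_of_notMem hpv]
      simp
  rw [hLHS, ← hRHS]


end BDAux

open BDAux in
/-- Markov property for the super-diagonal entries: for `B` uniform on `B_π`,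
`P[B[i+1] ≤ t | B[1],…,B[i]] = P[B[i+1] ≤ t | B[i]]` (as conditional expectations of the
indicator of `{B[i+1] ≤ t}`, almost everywhere). -/
theorem stmt_2 (n : ℕ) (hn : 3 ≤ n) (π : ℕ → ℝ) (hπ : ∀ j, 1 ≤ j → j ≤ n → 0 < π j)
    (i : ℕ) (hi1 : 1 ≤ i) (hi2 : i ≤ n - 2)
    (t : ℝ) (ht : t ∈ Set.Icc (0:ℝ) 1) :
    (unifBD n π)[Set.indicator {X | extCoord (n-1) X (i+1) ≤ t} (fun _ => (1:ℝ)) |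
        MeasurableSpace.comap (fun X (j : Fin i) => extCoord (n-1) X (j.1 + 1)) inferInstance]
      =ᵐ[unifBD n π]
    (unifBD n π)[Set.indicator {X | extCoord (n-1) X (i+1) ≤ t} (fun _ => (1:ℝ)) |
        MeasurableSpace.comap (fun X => extCoord (n-1) X i) inferInstance] := by
  classical
  by_cases hB0 : volume (BDSet n π) = 0
  · have hz : unifBD n π = 0 := by
      rw [unifBD, Measure.restrict_eq_zero.mpr hB0, smul_zero]
    have hbot : ae (unifBD n π) = ⊥ := by rw [hz]; exact ae_zero
    rw [Filter.eventuallyEq_iff_exists_mem]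
    exact ⟨∅, by rw [hbot]; exact Filter.mem_bot, fun x hx => absurd hx (Set.notMem_empty x)⟩
  -- main case
  have hBmeas := measurableSet_BDSet n π
  have hBle : volume (BDSet n π) ≤ 1 := by
    refine le_trans (measure_mono (BDSet_subset_cube hn hπ)) ?_
    rw [volume_pi_pi]
    simp [Real.volume_Icc]
  have hBne_top : volume (BDSet n π) ≠ ⊤ := (lt_of_le_of_lt hBle ENNReal.one_lt_top).ne
  set μ := unifBD n π with hμ
  have hμ_def : μ = (volume (BDSet n π))⁻¹ • volume.restrict (BDSet n π) := rfl
  haveI : IsProbabilityMeasure μ := by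
    constructor
    rw [hμ_def, Measure.smul_apply, Measure.restrict_apply_univ, smul_eq_mul]
    exact ENNReal.inv_mul_cancel hB0 hBne_top
  set f := Set.indicator {X : Fin (n-1) → ℝ | extCoord (n-1) X (i+1) ≤ t}
    (fun _ => (1:ℝ)) with hf_def
  set Pmap := fun (X : Fin (n-1) → ℝ) (j : Fin i) => extCoord (n-1) X (j.1 + 1) with hPmap_def
  set Xi := fun X : Fin (n-1) → ℝ => extCoord (n-1) X i with hXi_def
  have hPmap_meas : Measurable Pmap :=
    measurable_pi_lambda _ fun j => measurable_extCoord _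
  have hXi_meas : Measurable Xi := measurable_extCoord i
  have hm1 : MeasurableSpace.comap Pmap inferInstance ≤
      (inferInstance : MeasurableSpace (Fin (n-1) → ℝ)) := hPmap_meas.comap_le
  have hm2 : MeasurableSpace.comap Xi inferInstance ≤
      (inferInstance : MeasurableSpace (Fin (n-1) → ℝ)) := hXi_meas.comap_le
  have hm21 : MeasurableSpace.comap Xi inferInstance ≤
      MeasurableSpace.comap Pmap inferInstance := by
    have hfac : Xi = (fun v : Fin i → ℝ => v ⟨i-1, by omega⟩) ∘ Pmap := by
      funext x
      simp only [Function.comp, hXi_def, hPmap_def]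
      congr 1
      omega
    rw [hfac, ← MeasurableSpace.comap_comp]
    exact MeasurableSpace.comap_mono (Measurable.comap_le (measurable_pi_apply _))
  set g := fun X : Fin (n-1) → ℝ => phiBD n π i t (extCoord (n-1) X i) with hg_def
  have hg_meas : Measurable g := (measurable_phiBD n π i t).comp (measurable_extCoord i)
  have hg_m2 : AEStronglyMeasurable[MeasurableSpace.comap Xi inferInstance] g μ := by
    refine StronglyMeasurable.aestronglyMeasurable (Measurable.stronglyMeasurable ?_)
    exact (measurable_phiBD n π i t).comp (measurable_iff_comap_le.mpr le_rfl)
  have hT_meas : MeasurableSet {X : Fin (n-1) → ℝ | extCoord (n-1) X (i+1) ≤ t} :=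
    measurableSet_le (measurable_extCoord (i+1)) measurable_const
  have hf_int : Integrable f μ := (integrable_const (1:ℝ)).indicator hT_meas
  have hg_int : Integrable g μ := by
    refine (integrable_const (1:ℝ)).mono' hg_meas.aestronglyMeasurable
      (ae_of_all _ fun x => ?_)
    rw [Real.norm_eq_abs, abs_of_nonneg (phiBD_nonneg n π i t _)]
    exact phiBD_le_one n π i t _
  -- the set-integral identity on m₁-measurable sets
  have hsets : ∀ s : Set (Fin (n-1) → ℝ),
      MeasurableSet[MeasurableSpace.comap Pmap inferInstance] s →
      ∫ x in s, g x ∂μ = ∫ x in s, f x ∂μ := by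
    intro s hs
    rw [MeasurableSpace.measurableSet_comap] at hs
    obtain ⟨A, hA, rfl⟩ := hs
    have hs_meas : MeasurableSet (Pmap ⁻¹' A) := hPmap_meas hA
    have hfs : ∫ x in Pmap ⁻¹' A, f x ∂μ =
        ((volume (BDSet n π))⁻¹ *
          volume (Pmap ⁻¹' A ∩ BDSet n π ∩
            {X | extCoord (n-1) X (i+1) ≤ t})).toReal := by
      rw [hf_def, integral_indicator hT_meas, setIntegral_const, smul_eq_mul, mul_one, measureReal_def,
        Measure.restrict_apply hT_meas, hμ_def, Measure.smul_apply, smul_eq_mul,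
        Measure.restrict_apply (hT_meas.inter hs_meas)]
      have hset : {X : Fin (n-1) → ℝ | extCoord (n-1) X (i+1) ≤ t} ∩ Pmap ⁻¹' A ∩ BDSet n π
          = Pmap ⁻¹' A ∩ BDSet n π ∩ {X | extCoord (n-1) X (i+1) ≤ t} := by
        ext x
        simp only [Set.mem_inter_iff, Set.mem_setOf_eq]
        tauto
      rw [hset]
    have hgs : ∫ x in Pmap ⁻¹' A, g x ∂μ =
        ((volume (BDSet n π))⁻¹ *
          ∫⁻ x in Pmap ⁻¹' A ∩ BDSet n π, ENNReal.ofReal (g x) ∂volume).toReal := by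
      rw [integral_eq_lintegral_of_nonneg_ae
        (ae_of_all _ fun x => phiBD_nonneg n π i t _) hg_meas.aestronglyMeasurable]
      congr 1
      rw [hμ_def, Measure.restrict_smul, lintegral_smul_measure,
        Measure.restrict_restrict hs_meas, smul_eq_mul]
    rw [hgs, hfs]
    congr 1
    rw [key_lintegral hn hπ hi1 hi2 t A hA]
  have h1 : g =ᵐ[μ] μ[f | MeasurableSpace.comap Pmap inferInstance] :=
    ae_eq_condExp_of_forall_setIntegral_eq hm1 hf_int
      (fun s _ _ => hg_int.integrableOn) (fun s hs _ => hsets s hs) (hg_m2.mono hm21)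
  have h2 : g =ᵐ[μ] μ[f | MeasurableSpace.comap Xi inferInstance] :=
    ae_eq_condExp_of_forall_setIntegral_eq hm2 hf_int
      (fun s _ _ => hg_int.integrableOn) (fun s hs _ => hsets s (hm21 s hs)) hg_m2
  exact h1.symm.trans h2
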